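/- With the assumptions of the SDA convergence theorem (X > 0 solves the DARE, S = (I+GX)⁻¹A, and the SDA iterates are well-defined), for every k ≥ 0 one has X − H_k = (Sᵀ)^{2^k} (X + X G_k X) S^{2^k}; in particular H ≤ H_k ≤ H_{k+1} ≤ X in the Loewner order. -/

import Mathlib

open Matrix

section Aux
variable {N : ℕ}

private lemma psd_symm {M : Matrix (Fin N) (Fin N) ℝ} (h : M.PosSemidef) : Mᵀ = M := by
  have := h.isHermitian
  rwa [Matrix.IsHermitian, conjTranspose_eq_transpose_of_trivial] at this

private lemma psd_congr {M : Matrix (Fin N) (Fin N) ℝ} (h : M.PosSemidef)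
    (B : Matrix (Fin N) (Fin N) ℝ) : (Bᵀ * M * B).PosSemidef := by
  rw [← conjTranspose_eq_transpose_of_trivial]
  exact h.conjTranspose_mul_mul_same B

private lemma psd_congr' {M : Matrix (Fin N) (Fin N) ℝ} (h : M.PosSemidef)
    (B : Matrix (Fin N) (Fin N) ℝ) : (B * M * Bᵀ).PosSemidef := by
  rw [← conjTranspose_eq_transpose_of_trivial]
  exact h.mul_mul_conjTranspose_same B

/-- If `G, H` are PSD and `1 + G*H` is invertible, then `H * (1+G*H)⁻¹` is PSD. -/
private lemma psd_mul_inv {G H : Matrix (Fin N) (Fin N) ℝ} (hG : G.PosSemidef)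
    (hH : H.PosSemidef) (h : IsUnit (1 + G * H).det) :
    (H * (1 + G * H)⁻¹).PosSemidef := by
  obtain ⟨B, rfl⟩ : ∃ B : Matrix (Fin N) (Fin N) ℝ, H = Bᴴ * B := by
    open scoped MatrixOrder in
    exact ⟨CFC.sqrt H, by
      rw [(CFC.sqrt_nonneg H).posSemidef.isHermitian.eq, CFC.sqrt_mul_sqrt_self H hH.nonneg]⟩
  have hD : (1 + B * G * Bᴴ).PosDef :=
    Matrix.PosDef.one.add_posSemidef (hG.mul_mul_conjTranspose_same B)
  have hDdet : IsUnit (1 + B * G * Bᴴ).det :=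
    (Matrix.isUnit_iff_isUnit_det _).mp hD.isUnit
  have h1 : B * (1 + G * (Bᴴ * B)) = (1 + B * G * Bᴴ) * B := by noncomm_ring
  have h2 : (1 + B * G * Bᴴ) * (B * (1 + G * (Bᴴ * B))⁻¹) = B := by
    rw [← Matrix.mul_assoc, ← h1, Matrix.mul_assoc, Matrix.mul_nonsing_inv _ h, mul_one]
  have key : B * (1 + G * (Bᴴ * B))⁻¹ = (1 + B * G * Bᴴ)⁻¹ * B := by
    calc B * (1 + G * (Bᴴ * B))⁻¹
        = ((1 + B * G * Bᴴ)⁻¹ * (1 + B * G * Bᴴ)) * (B * (1 + G * (Bᴴ * B))⁻¹) := by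
          rw [Matrix.nonsing_inv_mul _ hDdet, one_mul]
      _ = (1 + B * G * Bᴴ)⁻¹ * ((1 + B * G * Bᴴ) * (B * (1 + G * (Bᴴ * B))⁻¹)) :=
          Matrix.mul_assoc _ _ _
      _ = (1 + B * G * Bᴴ)⁻¹ * B := by rw [h2]
  have hfin : Bᴴ * B * (1 + G * (Bᴴ * B))⁻¹ = Bᴴ * (1 + B * G * Bᴴ)⁻¹ * B := by
    rw [Matrix.mul_assoc, key, ← Matrix.mul_assoc]
  rw [hfin]
  exact hD.inv.posSemidef.conjTranspose_mul_mul_same B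

end Aux

/-- The structure-preserving doubling algorithm (SDA) iteration:
`SDA A G H k = (A_k, G_k, H_k)`. -/
noncomputable def SDA {N : ℕ} (A G H : Matrix (Fin N) (Fin N) ℝ) :
    ℕ → Matrix (Fin N) (Fin N) ℝ × Matrix (Fin N) (Fin N) ℝ × Matrix (Fin N) (Fin N) ℝ
  | 0 => (A, G, H)
  | k + 1 =>
      let p := SDA A G H k
      (p.1 * (1 + p.2.1 * p.2.2)⁻¹ * p.1,
       p.2.1 + p.1 * (1 + p.2.1 * p.2.2)⁻¹ * p.2.1 * p.1ᵀ,
       p.2.2 + p.1ᵀ * p.2.2 * (1 + p.2.1 * p.2.2)⁻¹ * p.1)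

/-- Theorem 2.1(2): `X − H_k = (Sᵀ)^(2^k) (X + X G_k X) S^(2^k)` and
`H ≤ H_k ≤ H_{k+1} ≤ X` in the Loewner order. -/
theorem sda_Hk_monotone {N : ℕ} (A G H X : Matrix (Fin N) (Fin N) ℝ)
    (hG : G.PosSemidef) (hH : H.PosSemidef)
    (hX : X.PosDef) (hXsym : X.IsSymm)
    (hGX : IsUnit (1 + G * X).det)
    (hDARE : X = Aᵀ * X * (1 + G * X)⁻¹ * A + H)
    (hinv : ∀ k, IsUnit (1 + (SDA A G H k).2.1 * (SDA A G H k).2.2).det) :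
    ∀ k,
      X - (SDA A G H k).2.2 =
        (((1 + G * X)⁻¹ * A)ᵀ) ^ (2 ^ k) * (X + X * (SDA A G H k).2.1 * X) *
          ((1 + G * X)⁻¹ * A) ^ (2 ^ k) ∧
      ((SDA A G H k).2.2 - H).PosSemidef ∧
      ((SDA A G H (k + 1)).2.2 - (SDA A G H k).2.2).PosSemidef ∧
      (X - (SDA A G H k).2.2).PosSemidef := by
  have hXs : Xᵀ = X := hXsym
  set S := (1 + G * X)⁻¹ * A with hS
  -- the main invariant of the SDA iteration
  have key : ∀ k, (SDA A G H k).2.1.PosSemidef ∧ (SDA A G H k).2.2.PosSemidef ∧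
      ((SDA A G H k).2.2 - H).PosSemidef ∧
      (SDA A G H k).1 = (1 + (SDA A G H k).2.1 * X) * S ^ 2 ^ k ∧
      X - (SDA A G H k).2.2 = (SDA A G H k).1ᵀ * X * S ^ 2 ^ k := by
    intro k
    induction k with
    | zero =>
      refine ⟨hG, hH, ?_, ?_, ?_⟩
      · show (H - H).PosSemidef
        rw [sub_self]
        exact Matrix.PosSemidef.zero
      · show A = (1 + G * X) * S ^ 2 ^ 0
        simp only [pow_zero, pow_one]
        rw [hS, ← Matrix.mul_assoc, Matrix.mul_nonsing_inv _ hGX, one_mul]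
      · show X - H = Aᵀ * X * S ^ 2 ^ 0
        simp only [pow_zero, pow_one]
        rw [hS, ← Matrix.mul_assoc]
        exact sub_eq_iff_eq_add.mpr hDARE
    | succ k ih =>
      obtain ⟨hGk, hHk, hHkH, hb, hc⟩ := ih
      have hdetE := hinv k
      have eqA : (SDA A G H (k+1)).1 = (SDA A G H k).1 *
          (1 + (SDA A G H k).2.1 * (SDA A G H k).2.2)⁻¹ * (SDA A G H k).1 := by
        simp [SDA]
      have eqG : (SDA A G H (k+1)).2.1 = (SDA A G H k).2.1 + (SDA A G H k).1 *
          (1 + (SDA A G H k).2.1 * (SDA A G H k).2.2)⁻¹ * (SDA A G H k).2.1 *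
          (SDA A G H k).1ᵀ := by
        simp [SDA]
      have eqH : (SDA A G H (k+1)).2.2 = (SDA A G H k).2.2 + (SDA A G H k).1ᵀ *
          (SDA A G H k).2.2 * (1 + (SDA A G H k).2.1 * (SDA A G H k).2.2)⁻¹ *
          (SDA A G H k).1 := by
        simp [SDA]
      set Ak := (SDA A G H k).1 with hAkdef
      set Gk := (SDA A G H k).2.1 with hGkdef
      set Hk := (SDA A G H k).2.2 with hHkdef
      set Sm := S ^ 2 ^ k with hSmdef
      have hGs : Gkᵀ = Gk := psd_symm hGk
      have hHs : Hkᵀ = Hk := psd_symm hHk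
      have hdetF : IsUnit (1 + Hk * Gk).det := by
        rw [Matrix.det_one_add_mul_comm]; exact hdetE
      set E := (1 + Gk * Hk)⁻¹ with hEdef
      set F := (1 + Hk * Gk)⁻¹ with hFdef
      have hE1 : (1 + Gk * Hk) * E = 1 := Matrix.mul_nonsing_inv _ hdetE
      have hE2 : E * (1 + Gk * Hk) = 1 := Matrix.nonsing_inv_mul _ hdetE
      have hF1 : (1 + Hk * Gk) * F = 1 := Matrix.mul_nonsing_inv _ hdetF
      have hF2 : F * (1 + Hk * Gk) = 1 := Matrix.nonsing_inv_mul _ hdetF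
      have hEF : Eᵀ = F := by
        rw [hEdef, hFdef, Matrix.transpose_nonsing_inv, Matrix.transpose_add,
          Matrix.transpose_one, Matrix.transpose_mul, hGs, hHs]
      have hHE : Hk * E = F * Hk := by
        calc Hk * E = (F * (1 + Hk * Gk)) * (Hk * E) := by rw [hF2, one_mul]
          _ = F * ((Hk * (1 + Gk * Hk)) * E) := by noncomm_ring
          _ = F * (Hk * ((1 + Gk * Hk) * E)) := by rw [Matrix.mul_assoc Hk]
          _ = F * Hk := by rw [hE1, mul_one]
      have hGF : E * Gk = Gk * F := by
        calc E * Gk = (E * Gk) * ((1 + Hk * Gk) * F) := by rw [hF1, mul_one]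
          _ = (E * (1 + Gk * Hk)) * (Gk * F) := by noncomm_ring
          _ = Gk * F := by rw [hE2, one_mul]
      have hpow : S ^ 2 ^ (k + 1) = Sm * Sm := by
        rw [hSmdef, pow_succ, pow_mul, sq]
      have hGFpsd : (Gk * F).PosSemidef := by
        rw [hFdef]; exact psd_mul_inv hHk hGk hdetF
      have hHEpsd : (Hk * E).PosSemidef := by
        rw [hEdef]; exact psd_mul_inv hGk hHk hdetE
      have hstep : (Akᵀ * Hk * E * Ak).PosSemidef := by
        have h3 : Akᵀ * Hk * E * Ak = Akᵀ * (Hk * E) * Ak := by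
          rw [Matrix.mul_assoc Akᵀ Hk E]
        rw [h3]; exact psd_congr hHEpsd Ak
      refine ⟨?_, ?_, ?_, ?_, ?_⟩
      · rw [eqG]
        have h4 : Ak * E * Gk * Akᵀ = Ak * (Gk * F) * Akᵀ := by
          rw [Matrix.mul_assoc Ak E Gk, hGF]
        rw [h4]
        exact hGk.add (psd_congr' hGFpsd Ak)
      · rw [eqH]
        exact hHk.add hstep
      · rw [eqH]
        have h5 : Hk + Akᵀ * Hk * E * Ak - H = (Hk - H) + Akᵀ * Hk * E * Ak := by abel
        rw [h5]
        exact hHkH.add hstep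
      · rw [eqA, eqG, hpow]
        have h1mE : E * (Gk * Hk) = 1 - E := by
          calc E * (Gk * Hk) = E * (1 + Gk * Hk) - E := by noncomm_ring
            _ = 1 - E := by rw [hE2]
        have hEA : Sm + E * Gk * ((X - Hk) * Sm) = E * Ak := by
          calc Sm + E * Gk * ((X - Hk) * Sm)
              = Sm + E * Gk * (X * Sm) - (E * (Gk * Hk)) * Sm := by noncomm_ring
            _ = Sm + E * Gk * (X * Sm) - (1 - E) * Sm := by rw [h1mE]
            _ = E * ((1 + Gk * X) * Sm) := by noncomm_ring
            _ = E * Ak := by rw [← hb]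
        symm
        calc (1 + (Gk + Ak * E * Gk * Akᵀ) * X) * (Sm * Sm)
            = (1 + Gk * X) * Sm * Sm + (Ak * E * Gk) * ((Akᵀ * X * Sm) * Sm) := by
              noncomm_ring
          _ = Ak * Sm + (Ak * E * Gk) * ((X - Hk) * Sm) := by rw [← hb, ← hc]
          _ = Ak * (Sm + E * Gk * ((X - Hk) * Sm)) := by noncomm_ring
          _ = Ak * (E * Ak) := by rw [hEA]
          _ = Ak * E * Ak := (Matrix.mul_assoc _ _ _).symm
      · rw [eqA, eqH, hpow]
        have hFc : F * ((X - Hk) * Sm) = X * Sm - (Hk * E) * Ak := by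
          calc F * ((X - Hk) * Sm)
              = ((1 + Hk * Gk) * F) * (X * Sm) - Hk * (Gk * F) * (X * Sm)
                  - (F * Hk) * Sm := by noncomm_ring
            _ = 1 * (X * Sm) - Hk * (E * Gk) * (X * Sm) - (Hk * E) * Sm := by
                rw [hF1, ← hGF, ← hHE]
            _ = X * Sm - (Hk * E) * ((1 + Gk * X) * Sm) := by noncomm_ring
            _ = X * Sm - (Hk * E) * Ak := by rw [← hb]
        symm
        calc (Ak * E * Ak)ᵀ * X * (Sm * Sm)
            = (Akᵀ * (Eᵀ * Akᵀ)) * X * (Sm * Sm) := by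
              rw [Matrix.transpose_mul, Matrix.transpose_mul]
          _ = Akᵀ * (F * ((Akᵀ * X * Sm) * Sm)) := by rw [hEF]; noncomm_ring
          _ = Akᵀ * (F * ((X - Hk) * Sm)) := by rw [← hc]
          _ = Akᵀ * (X * Sm - (Hk * E) * Ak) := by rw [hFc]
          _ = Akᵀ * X * Sm - Akᵀ * Hk * E * Ak := by noncomm_ring
          _ = (X - Hk) - Akᵀ * Hk * E * Ak := by rw [← hc]
          _ = X - (Hk + Akᵀ * Hk * E * Ak) := by abel
  -- now derive the statement
  intro k
  obtain ⟨hGk, hHk, hHkH, hb, hc⟩ := key k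
  have hdetE := hinv k
  have eqH : (SDA A G H (k+1)).2.2 = (SDA A G H k).2.2 + (SDA A G H k).1ᵀ *
      (SDA A G H k).2.2 * (1 + (SDA A G H k).2.1 * (SDA A G H k).2.2)⁻¹ *
      (SDA A G H k).1 := by
    simp [SDA]
  set Ak := (SDA A G H k).1 with hAkdef
  set Gk := (SDA A G H k).2.1 with hGkdef
  set Hk := (SDA A G H k).2.2 with hHkdef
  have hGs : Gkᵀ = Gk := psd_symm hGk
  have hHEpsd : (Hk * (1 + Gk * Hk)⁻¹).PosSemidef := psd_mul_inv hGk hHk hdetE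
  have hstep : (Akᵀ * Hk * (1 + Gk * Hk)⁻¹ * Ak).PosSemidef := by
    have h3 : Akᵀ * Hk * (1 + Gk * Hk)⁻¹ * Ak = Akᵀ * (Hk * (1 + Gk * Hk)⁻¹) * Ak := by
      rw [Matrix.mul_assoc Akᵀ Hk]
    rw [h3]; exact psd_congr hHEpsd Ak
  have hident : X - Hk = (Sᵀ) ^ 2 ^ k * (X + X * Gk * X) * S ^ 2 ^ k := by
    calc X - Hk = Akᵀ * X * S ^ 2 ^ k := hc
      _ = ((1 + Gk * X) * S ^ 2 ^ k)ᵀ * X * S ^ 2 ^ k := by rw [hb]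
      _ = (Sᵀ) ^ 2 ^ k * (X + X * Gk * X) * S ^ 2 ^ k := by
          rw [Matrix.transpose_mul, Matrix.transpose_pow, Matrix.transpose_add,
            Matrix.transpose_one, Matrix.transpose_mul Gk X, hGs, hXs]
          noncomm_ring
  refine ⟨hident, hHkH, ?_, ?_⟩
  · rw [eqH, add_sub_cancel_left]
    exact hstep
  · rw [hident]
    have hmid : (X + X * Gk * X).PosSemidef := by
      refine hX.posSemidef.add ?_
      have := psd_congr hGk X
      rwa [hXs] at this
    rw [← Matrix.transpose_pow]
    exact psd_congr hmid _
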